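/- Separation of boundary fibers over distinct projection points: fix k, base point e ∈ X_k, and distinct v, w ∈ X_k. For every x ∈ ∂Z with π_k(x) = v and y ∈ ∂Z with π_k(y) = w, the Gromov product satisfies (x | y)_e < Ω(max{d(e,v), d(e,w)} + Ω), where Ω is the universal constant of the coarsely convex structure. -/

import Mathlib

open Set ENNReal

/-- `g` is a (unit-speed) geodesic ray emanating from `e`. -/
def IsRay {Z : Type*} [MetricSpace Z] (e : Z) (g : ℝ → Z) : Prop :=
  g 0 = e ∧ ∀ t s : ℝ, 0 ≤ t → 0 ≤ s → dist (g t) (g s) = |t - s|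

/-- The Gromov product `(γ_e^x ∣ γ_e^y)_e` of two rays with threshold `D₁`. -/
noncomputable def rayRayProd {Z : Type*} [MetricSpace Z] (D₁ : ℝ)
    (g h : ℝ → Z) : ℝ≥0∞ :=
  sSup (ENNReal.ofReal '' {t : ℝ | 0 ≤ t ∧ dist (g t) (h t) ≤ D₁})

/-- Separation of boundary fibers over distinct projection points: in a proper
tree `Z` of geodesic coarsely convex spaces with piece `X_k ∋ e` and distinct
`v, w ∈ X_k`, let `x, y ∈ ∂Z` be boundary points with `π_k(x) = v` and
`π_k(y) = w`, represented by the geodesic rays `g = γ_e^x`, `h = γ_e^y` which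
exit `X_k` at `v` (at time `d(e,v)`) resp. at `w` (at time `d(e,w)`).  Then
the Gromov product satisfies `(x ∣ y)_e < Ω(max{d(e,v), d(e,w)} + Ω)`. -/
theorem stmt12 {Z : Type*} [MetricSpace Z] [ProperSpace Z]
    (Xk : Set Z) (e v w : Z) (he : e ∈ Xk) (hv : v ∈ Xk) (hw : w ∈ Xk)
    (hvw : v ≠ w) (Ω D₁ : ℝ) (hΩ : 1 ≤ Ω) (hD₁ : 0 ≤ D₁)
    (g h : ℝ → Z) (hg : IsRay e g) (hh : IsRay e h)
    -- the rays exit `X_k` at `v` resp. `w`: `π_k(x) = v`, `π_k(y) = w`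
    (hgv : g (dist e v) = v) (hhw : h (dist e w) = w)
    (hgout : ∀ t : ℝ, dist e v < t → g t ∉ Xk)
    (hhout : ∀ t : ℝ, dist e w < t → h t ∉ Xk)
    -- tree structure: beyond the exit times, geodesics between the two rays
    -- pass through `v` and `w`
    (htree : ∀ t : ℝ, max (dist e v) (dist e w) ≤ t →
      dist (g t) (h t) = dist (g t) v + dist v w + dist w (h t))
    -- up to the Gromov product of the rays, the rays stay `Ω`-close
    (hmax : ∀ t : ℝ, 0 ≤ t → ENNReal.ofReal t ≤ rayRayProd D₁ g h →
      dist (g t) (h t) ≤ Ω)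
    -- the Gromov product `(x ∣ y)_e` of the boundary points is dominated by
    -- `Ω` times the Gromov product of the rays
    (q : ℝ≥0∞) (hq : q ≤ ENNReal.ofReal Ω * rayRayProd D₁ g h) :
    q < ENNReal.ofReal (Ω * (max (dist e v) (dist e w) + Ω)) := by
  set M : ℝ := max (dist e v) (dist e w) with hM
  have hM0 : 0 ≤ M := le_trans dist_nonneg (le_max_left _ _)
  have hΩ0 : (0:ℝ) < Ω := lt_of_lt_of_le one_pos hΩ
  -- key: the ray Gromov product is < M + Ω
  have key : rayRayProd D₁ g h < ENNReal.ofReal (M + Ω) := by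
    by_contra hcon
    push_neg at hcon
    set t : ℝ := M + Ω with ht
    have ht0 : 0 ≤ t := by positivity
    have h1 : dist (g t) (h t) ≤ Ω := hmax t ht0 hcon
    have htM : M ≤ t := by linarith
    have h2 : dist (g t) (h t) = dist (g t) v + dist v w + dist w (h t) :=
      htree t htM
    have hgt : dist (g t) v = t - dist e v := by
      have hd := hg.2 t (dist e v) ht0 dist_nonneg
      rw [hgv] at hd
      have h3 : dist e v ≤ M := le_max_left _ _
      rw [hd, abs_of_nonneg (by linarith)]
    have hht : dist w (h t) = t - dist e w := by
      have hd := hh.2 t (dist e w) ht0 dist_nonneg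
      rw [hhw] at hd
      have h4 : dist e w ≤ M := le_max_right _ _
      rw [dist_comm, hd, abs_of_nonneg (by linarith)]
    have hdvw : 0 < dist v w := dist_pos.mpr hvw
    have h3 : dist e v ≤ M := le_max_left _ _
    have h4 : dist e w ≤ M := le_max_right _ _
    rw [h2, hgt, hht] at h1
    linarith
  calc q ≤ ENNReal.ofReal Ω * rayRayProd D₁ g h := hq
    _ < ENNReal.ofReal Ω * ENNReal.ofReal (M + Ω) := by
        rw [ENNReal.mul_lt_mul_iff_right (by simp [hΩ0]) ENNReal.ofReal_ne_top]
        exact key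
    _ = ENNReal.ofReal (Ω * (M + Ω)) := (ENNReal.ofReal_mul hΩ0.le).symm
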